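/- Let f = (f_0, f̃) : C_m[a_1,…,a_m] → C_n[b_1,…,b_n] be a morphism of weak higher dimensional transition systems. Then: (1) there is a set map f_* : {1,…,m} → {1,…,n} such that f̃(a_i,i) = (a_i, f_*(i)) for all i (so b_{f_*(i)} = a_i), and f_* is injective; (2) the state map f_0 : {0,1}^m → {0,1}^n is strictly increasing and adjacency-preserving; moreover if (ε) and (ε') differ exactly in coordinate j, then f_0(ε) and f_0(ε') differ exactly in coordinate f_*(j). -/

import Mathlib

universe u u1 u2 u3 u4 u5 u6

/-- A transition structure over the set of labels `Λ`: a set of states `S`, a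
set of actions `L`, a labelling map `μ : L → Λ`, and a set of transitions
`(α, u_1, …, u_n, β)` encoded as `T α [u_1, …, u_n] β`. Weak higher dimensional
transition systems are the transition structures whose transitions have
nonempty lists of actions and satisfying the Multiset and Coherence axioms. -/
structure TransSys (Λ : Type u) where
  /-- the states -/
  S : Type u1
  /-- the actions -/
  L : Type u2
  /-- the labelling map -/
  μ : L → Λ
  /-- the transitions -/
  T : S → List L → S → Prop

/-- A morphism of (weak higher dimensional) transition systems: a pair of set
maps on states and actions commuting with the labelling maps and taking
transitions to transitions. -/
structure TransSys.Hom {Λ : Type u} (X : TransSys.{u, u1, u2} Λ)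
    (Y : TransSys.{u, u3, u4} Λ) where
  /-- the map on states -/
  f0 : X.S → Y.S
  /-- the map on actions -/
  fa : X.L → Y.L
  label : ∀ x, Y.μ (fa x) = X.μ x
  map : ∀ (α : X.S) (l : List X.L) (β : X.S), X.T α l β → Y.T (f0 α) (l.map fa) (f0 β)

/-- Composition of morphisms of transition systems. -/
def TransSys.Hom.comp {Λ : Type u} {X : TransSys.{u, u1, u2} Λ}
    {Y : TransSys.{u, u3, u4} Λ} {Z : TransSys.{u, u5, u6} Λ}
    (g : Y.Hom Z) (f : X.Hom Y) : X.Hom Z where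
  f0 := fun x => g.f0 (f.f0 x)
  fa := fun x => g.fa (f.fa x)
  label := fun x => (g.label (f.fa x)).trans (f.label x)
  map := fun α l β h => by
    have h2 := g.map _ _ _ (f.map α l β h)
    rw [List.map_map] at h2
    exact h2

/-- The set of transitions of the cube `C_n[a_1,…,a_n]`: the states are the
elements of `{0,1}^n`, the actions are the indices `i ∈ {1,…,n}` (the action
`i` standing for the pair `(a_i, i)`, labelled by `a_i`). -/
@[reducible] def CubeT (n : ℕ) (ε : Fin n → Bool) (l : List (Fin n)) (ε' : Fin n → Bool) :
    Prop :=
  l ≠ [] ∧ l.Nodup ∧ (∀ i, ε i ≤ ε' i) ∧ ∀ i : Fin n, ε i ≠ ε' i ↔ i ∈ l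

/-- The cube `C_n[a_1,…,a_n]` as a (weak higher dimensional) transition
system. -/
@[reducible] def cube {Λ : Type u} (n : ℕ) (a : Fin n → Λ) : TransSys.{u, 0, 0} Λ where
  S := Fin n → Bool
  L := Fin n
  μ := a
  T := CubeT n

/-- Every morphism `F = (f₀, f̃) : C_m[a_1,…,a_m] → C_n[b_1,…,b_n]` of weak
higher dimensional transition systems satisfies: (1) its action map is of the
form `f̃(a_i,i) = (a_i, f_*(i))` (built into the encoding) with
`b_{f_*(i)} = a_i`, and `f_*` is injective; (2) its state map `f₀` is
strictly increasing and adjacency-preserving; moreover, if `ε` and `ε'` differ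
exactly in coordinate `j`, then `f₀(ε)` and `f₀(ε')` differ exactly in
coordinate `f_*(j)`. -/
theorem cube_morphism_properties {Λ : Type u} (m n : ℕ)
    (a : Fin m → Λ) (b : Fin n → Λ) (F : (cube m a).Hom (cube n b)) :
    (Function.Injective F.fa ∧ ∀ i : Fin m, b (F.fa i) = a i) ∧
    StrictMono F.f0 ∧
    (∀ ε ε' : Fin m → Bool,
      hammingDist ε ε' = 1 → hammingDist (F.f0 ε) (F.f0 ε') = 1) ∧
    ∀ (ε ε' : Fin m → Bool) (j : Fin m), (∀ k, ε k ≠ ε' k ↔ k = j) →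
      ∀ k : Fin n, F.f0 ε k ≠ F.f0 ε' k ↔ k = F.fa j := by
  have single : ∀ (ε ε' : Fin m → Bool) (j : Fin m), (∀ k, ε k ≠ ε' k ↔ k = j) →
      ε j ≤ ε' j → ∀ k : Fin n, F.f0 ε k ≠ F.f0 ε' k ↔ k = F.fa j := by
    intro ε ε' j hd hle k
    have hT : CubeT m ε [j] ε' := by
      refine ⟨by simp, List.nodup_singleton _, ?_, ?_⟩
      · intro i
        by_cases hi : i = j
        · subst hi; exact hle
        · exact le_of_eq (not_not.mp (fun h => hi ((hd i).mp h)))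
      · intro i; simpa using hd i
    have h2 := F.map ε [j] ε' hT
    simpa using h2.2.2.2 k
  have last : ∀ (ε ε' : Fin m → Bool) (j : Fin m), (∀ k, ε k ≠ ε' k ↔ k = j) →
      ∀ k : Fin n, F.f0 ε k ≠ F.f0 ε' k ↔ k = F.fa j := by
    intro ε ε' j hd k
    by_cases hle : ε j ≤ ε' j
    · exact single ε ε' j hd hle k
    · have hle' : ε' j ≤ ε j := le_of_not_ge hle
      have hd' : ∀ k, ε' k ≠ ε k ↔ k = j := fun k => by rw [ne_comm]; exact hd k
      have := single ε' ε j hd' hle' k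
      rw [← this, ne_comm]
  refine ⟨⟨?_, fun i => F.label i⟩, ?_, ?_, last⟩
  · intro i j hfa
    by_contra hij
    have hT : CubeT m (fun _ => false) [i, j] (fun k => decide (k = i ∨ k = j)) := by
      refine ⟨by simp, by simp [hij], fun k => Bool.false_le _, fun k => by simp; tauto⟩
    have h2 := F.map _ [i, j] _ hT
    have := h2.2.1
    simp only [List.map_cons, List.map_nil, List.nodup_cons, List.mem_singleton] at this
    exact this.1 (by simp [hfa])
  · intro ε ε' hlt
    set l := ({i | ε i ≠ ε' i} : Finset (Fin m)).toList with hl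
    have hmem : ∀ i, i ∈ l ↔ ε i ≠ ε' i := by
      intro i; simp [hl, Finset.mem_toList]
    have hT : CubeT m ε l ε' := by
      refine ⟨?_, Finset.nodup_toList _, fun i => hlt.le i, fun i => (hmem i).symm⟩
      intro hnil
      apply hlt.ne
      funext i
      by_contra h
      exact List.not_mem_nil (hnil ▸ (hmem i).mpr h)
    have h2 := F.map ε l ε' hT
    obtain ⟨k, hk⟩ := List.exists_mem_of_ne_nil _ h2.1
    refine lt_of_le_of_ne (fun k => h2.2.2.1 k) ?_
    intro heq
    exact ((h2.2.2.2 k).mpr hk) (congrFun heq k)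
  · intro ε ε' h
    rw [hammingDist, Finset.card_eq_one] at h
    obtain ⟨j, hj⟩ := h
    have hd : ∀ k, ε k ≠ ε' k ↔ k = j := by
      intro k
      have := Finset.ext_iff.mp hj k
      simpa using this
    rw [hammingDist, Finset.card_eq_one]
    exact ⟨F.fa j, Finset.ext fun k => by simpa using last ε ε' j hd k⟩
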